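/- For every positive integer k, the least ordinal β such that β → (top ω+1)^1_k holds is ω^k + 1. That is: for every coloring c : ω^k + 1 → k there exist i < k and a subset X ⊆ c⁻¹({i}) homeomorphic to ω + 1; and there is a coloring c : ω^k → k such that no color class contains a subspace homeomorphic to ω + 1. -/

import Mathlib

open Set Ordinal
open scoped Cardinal

noncomputable section

/-- Natural (Hessenberg) addition of ordinals, as `Ordinal.nadd` of the older Mathlib
(removed from Mathlib since). -/
def nadd.{u} (a b : Ordinal.{u}) : Ordinal.{u} :=
  max (blsub.{u, u} a fun a' _ => nadd a' b) (blsub.{u, u} b fun b' _ => nadd a b')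
termination_by (a, b)
decreasing_by
  all_goals first
    | exact Prod.Lex.left _ _ (by assumption)
    | exact Prod.Lex.right _ (by assumption)

infixl:65 " ♯ " => nadd

/-- Derived set (non-isolated points) of a set of ordinals, as a subspace. -/
def deriv' (s : Set Ordinal.{0}) : Set Ordinal.{0} := {x ∈ s | x ∈ closure (s \ {x})}

/-- Iterated Cantor–Bendixson derivative. -/
def iterDeriv (s : Set Ordinal.{0}) (o : Ordinal.{0}) : Set Ordinal.{0} :=
  Ordinal.limitRecOn o s (fun _ ih => deriv' ih) (fun o _ ih => ⋂ (p : Ordinal.{0}) (h : p < o), ih p h)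

/-- `s` contains a homeomorphic copy of the ordinal `α` (with its order topology). -/
def HomeoCopy (α : Ordinal.{0}) (s : Set Ordinal.{0}) : Prop :=
  ∃ t : Set Ordinal, t ⊆ s ∧ Nonempty ((Iio α : Set Ordinal.{0}) ≃ₜ t)

/-- Two ordinals are biembeddable: each is homeomorphic to a subspace of the other. -/
def Biembed (α β : Ordinal.{0}) : Prop := HomeoCopy α (Iio β) ∧ HomeoCopy β (Iio α)

/-- Two sets of ordinals are order-homeomorphic: there is an order-preserving homeomorphism. -/
def OrderHomeo (X Y : Set Ordinal.{0}) : Prop :=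
  ∃ e : X ≃ₜ Y, ∀ a b : X, a ≤ b ↔ e a ≤ e b

/-- An ordinal is order-reinforcing. -/
def OrderReinforcing (α : Ordinal.{0}) : Prop :=
  ∀ X : Set Ordinal, Nonempty ((Iio α : Set Ordinal.{0}) ≃ₜ X) → ∃ Y ⊆ X, OrderHomeo (Iio α) Y

/-- The Cantor–Bendixson rank of an ordinal: the least exponent in its Cantor normal form. -/
def CB (x : Ordinal.{0}) : Ordinal := if x = 0 then 0 else sSup {γ | (ω : Ordinal.{0}) ^ γ ∣ x}

/-- The natural (Hessenberg) sum of a finite family of ordinals. -/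
def natSumFam {k : ℕ} (α : Fin k → Ordinal.{0}) : Ordinal := (List.ofFn α).foldr (· ♯ ·) 0

/-- The Milner–Rado sum of a finite family of ordinals. -/
def mrSumFam {k : ℕ} (α : Fin k → Ordinal.{0}) : Ordinal :=
  sInf {δ | ∀ β : Fin k → Ordinal, (∀ i, β i < α i) → δ ≠ natSumFam β}

/-- The topological pigeonhole relation `β → (top α i)¹` for finitely many colours. -/
def TopPH {k : ℕ} (β : Ordinal.{0}) (α : Fin k → Ordinal.{0}) : Prop :=
  ∀ c : Ordinal → Fin k, ∃ i, HomeoCopy (α i) (Iio β ∩ c ⁻¹' {i})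

/-- The topological pigeonhole relation with an arbitrary index type of colours. -/
def TopPHFam {ι : Type*} (β : Ordinal.{0}) (α : ι → Ordinal.{0}) : Prop :=
  ∀ c : Ordinal → ι, ∃ i, HomeoCopy (α i) (Iio β ∩ c ⁻¹' {i})

/-- `ω̄[γ, m]`: `ω ^ γ * m + 1` if `γ > 0`, and `m` if `γ = 0`. -/
def obar (γ : Ordinal.{0}) (m : ℕ) : Ordinal := if γ = 0 then (m : Ordinal.{0}) else ω ^ γ * m + 1

/-- `C` is closed and unbounded in `o`. -/
def IsClubIn (C : Set Ordinal.{0}) (o : Ordinal.{0}) : Prop :=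
  C ⊆ Iio o ∧ (∀ x < o, ∃ y ∈ C, x ≤ y) ∧
    ∀ x < o, x ≠ 0 → (∀ y < x, ∃ z ∈ C, y < z ∧ z < x) → x ∈ C

/-- `S` is stationary in `o`: it meets every club subset of `o`. -/
def StationaryIn (S : Set Ordinal.{0}) (o : Ordinal.{0}) : Prop :=
  ∀ C, IsClubIn C o → (S ∩ C).Nonempty



lemma iio_eq_icc : (Iio (ω+1) : Set Ordinal.{0}) = Icc 0 ω := by
  ext y
  simp [Order.lt_add_one_iff]

lemma aux_copy {s : Set Ordinal.{0}} {x : Ordinal} (hx : Order.IsSuccLimit x) (hc : x.card ≤ ℵ₀)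
    (hxs : x ∈ s) (hcof : ∀ b < x, ∃ z ∈ s, b < z ∧ z < x) : HomeoCopy (ω+1) s := by
  -- cofinal ω-sequence
  obtain ⟨ι, f0, hf0, hι⟩ := Ordinal.exists_lsub_cof x
  have hcof' : x.cof = ℵ₀ :=
    le_antisymm ((Ordinal.cof_le_card x).trans hc) (Ordinal.aleph0_le_cof.2 hx)
  rw [hcof'] at hι
  obtain ⟨eqv⟩ : Nonempty (ι ≃ ℕ) := by rw [← Cardinal.eq, hι]; exact Cardinal.mk_nat.symm
  set g : ℕ → Ordinal := fun n => f0 (eqv.symm n) with hg_def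
  have hg : ∀ n, g n < x := fun n => by rw [← hf0]; exact Ordinal.lt_lsub _ _
  have hg_cof : ∀ b < x, ∃ n, b ≤ g n := by
    intro b hb
    rw [← hf0] at hb
    obtain ⟨i, hi⟩ := Ordinal.lt_lsub_iff.1 hb
    exact ⟨eqv i, by simpa [hg_def] using hi⟩
  -- pick function
  have pick : ∀ b : Ordinal, b < x → {z : Ordinal // z ∈ s ∧ b < z ∧ z < x} := fun b hb =>
    ⟨(hcof b hb).choose, (hcof b hb).choose_spec.1, (hcof b hb).choose_spec.2.1,
      (hcof b hb).choose_spec.2.2⟩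
  let F : ℕ → {z : Ordinal // z ∈ s ∧ z < x} := fun n => Nat.rec
    ((fun p => (⟨p.1, p.2.1, p.2.2.2⟩ : {z : Ordinal // z ∈ s ∧ z < x})) (pick (g 0) (hg 0)))
    (fun n ih =>
      (fun p => (⟨p.1, p.2.1, p.2.2.2⟩ : {z : Ordinal // z ∈ s ∧ z < x}))
        (pick (max (g (n+1)) ih.1) (max_lt (hg (n+1)) ih.2.2))) n
  set f : ℕ → Ordinal := fun n => (F n).1 with hf_def
  have hfs : ∀ n, f n ∈ s := fun n => (F n).2.1
  have hfx : ∀ n, f n < x := fun n => (F n).2.2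
  have hf_succ : ∀ n, f n < f (n+1) := by
    intro n
    have := (pick (max (g (n+1)) (F n).1) (max_lt (hg (n+1)) (F n).2.2)).2.2.1
    exact lt_of_le_of_lt (le_max_right _ _) this
  have hf_mono : StrictMono f := strictMono_nat_of_lt_succ hf_succ
  have hgf : ∀ n, g n < f n := by
    intro n
    cases n with
    | zero => exact (pick (g 0) (hg 0)).2.2.1
    | succ n =>
      have := (pick (max (g (n+1)) (F n).1) (max_lt (hg (n+1)) (F n).2.2)).2.2.1
      exact lt_of_le_of_lt (le_max_left _ _) this
  have hf_cof : ∀ b < x, ∃ n, b < f n := fun b hb => by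
    obtain ⟨n, hn⟩ := hg_cof b hb
    exact ⟨n, lt_of_le_of_lt hn (hgf n)⟩
  -- the copy
  set t : Set Ordinal := range f ∪ {x} with ht_def
  have hts : t ⊆ s := by
    rintro z (⟨n, rfl⟩ | rfl)
    · exact hfs n
    · exact hxs
  -- the map
  have hmem : ∀ p : (Iio (ω+1) : Set Ordinal.{0}), (if h : p.1 < ω then
      f ((Ordinal.lt_omega0.1 h).choose) else x) ∈ t := by
    intro p
    by_cases h : p.1 < ω
    · rw [dif_pos h]; exact Or.inl (mem_range_self _)
    · rw [dif_neg h]; exact Or.inr rfl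
  set G : (Iio (ω+1) : Set Ordinal.{0}) → Ordinal := fun p =>
    if h : p.1 < ω then f ((Ordinal.lt_omega0.1 h).choose) else x with hG_def
  have hGnat : ∀ (p : (Iio (ω+1) : Set Ordinal.{0})) (h : p.1 < ω) (m : ℕ), p.1 = (m:Ordinal) →
      G p = f m := by
    intro p h m hm
    have h1 : ((Ordinal.lt_omega0.1 h).choose : Ordinal) = (m:Ordinal) :=
      ((Ordinal.lt_omega0.1 h).choose_spec.symm.trans hm)
    simp only [hG_def, dif_pos h]
    rw [Nat.cast_inj.1 h1]
  have hGom : ∀ (p : (Iio (ω+1) : Set Ordinal.{0})), ¬ p.1 < ω → G p = x := by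
    intro p h; simp only [hG_def, dif_neg h]
  have hval_om' : ∀ (v : Ordinal), v < ω + 1 → ¬ v < ω → v = ω := by
    intro v hv h
    rw [Ordinal.add_one_eq_succ, Order.lt_succ_iff] at hv
    exact le_antisymm hv (not_lt.1 h)
  have hval_om : ∀ (p : (Iio (ω+1) : Set Ordinal.{0})), ¬ p.1 < ω → p.1 = ω :=
    fun p h => hval_om' p.1 p.2 h
  set e : (Iio (ω+1) : Set Ordinal.{0}) → t := fun p => ⟨G p, hmem p⟩ with he_def
  have hinj : Function.Injective e := by
    intro p q hpq
    have hpq' : G p = G q := congrArg Subtype.val hpq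
    by_cases hp : p.1 < ω <;> by_cases hq : q.1 < ω
    · obtain ⟨m, hm⟩ := Ordinal.lt_omega0.1 hp
      obtain ⟨m', hm'⟩ := Ordinal.lt_omega0.1 hq
      rw [hGnat p hp m hm, hGnat q hq m' hm'] at hpq'
      apply Subtype.ext
      rw [hm, hm', hf_mono.injective hpq']
    · rw [hGnat p hp _ (Ordinal.lt_omega0.1 hp).choose_spec, hGom q hq] at hpq'
      exact absurd hpq' (ne_of_lt (hfx _))
    · rw [hGom p hp, hGnat q hq _ (Ordinal.lt_omega0.1 hq).choose_spec] at hpq'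
      exact absurd hpq'.symm (ne_of_lt (hfx _))
    · exact Subtype.ext ((hval_om p hp).trans (hval_om q hq).symm)
  have hsurj : Function.Surjective e := by
    rintro ⟨z, (⟨n, rfl⟩ | rfl)⟩
    · refine ⟨⟨(n:Ordinal), ?_⟩, ?_⟩
      · exact lt_trans (Ordinal.nat_lt_omega0 n) (lt_of_le_of_lt (le_refl _)
          (by rw [Ordinal.add_one_eq_succ]; exact Order.lt_succ ω))
      · exact Subtype.ext (hGnat _ (Ordinal.nat_lt_omega0 n) n rfl)
    · refine ⟨⟨ω, by rw [Ordinal.add_one_eq_succ]; exact Order.lt_succ ω⟩, ?_⟩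
      exact Subtype.ext (hGom _ (lt_irrefl ω))
  -- continuity
  have hGcont : Continuous G := by
    rw [continuous_iff_continuousAt]
    intro p
    by_cases h : p.1 < ω
    · -- isolated point
      have hop : IsOpen ({p} : Set (Iio (ω+1) : Set Ordinal.{0})) := by
        have h1 : IsOpen ({p.1} : Set Ordinal) := by
          rw [Ordinal.isOpen_singleton_iff]
          intro hl
          exact absurd (Ordinal.omega0_le_of_isSuccLimit hl) (not_le.2 h)
        have h2 : (Subtype.val ⁻¹' ({p.1} : Set Ordinal)) = {p} := by
          ext q; simp [Subtype.ext_iff]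
        rw [← h2]
        exact h1.preimage continuous_subtype_val
      have : G =ᶠ[nhds p] (fun _ => G p) := by
        filter_upwards [hop.mem_nhds rfl] with q hq
        rw [mem_singleton_iff] at hq; rw [hq]
      exact (continuousAt_const).congr this.symm
    · -- limit point ω
      have hpx : G p = x := hGom p h
      have hpv : p.1 = ω := hval_om p h
      rw [ContinuousAt, hpx, tendsto_order]
      constructor
      · intro b hb
        obtain ⟨n, hn⟩ := hf_cof b hb
        have hopen : IsOpen {q : (Iio (ω+1) : Set Ordinal.{0}) | ((n:ℕ):Ordinal) < q.1} :=
          (isOpen_Ioi).preimage continuous_subtype_val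
        have hpmem : ((n:ℕ):Ordinal) < p.1 := by rw [hpv]; exact Ordinal.nat_lt_omega0 n
        filter_upwards [hopen.mem_nhds hpmem] with q hq
        by_cases h' : q.1 < ω
        · obtain ⟨m, hm⟩ := Ordinal.lt_omega0.1 h'
          rw [hGnat q h' m hm]
          have : n ≤ m := by
            have := hq; rw [hm] at this
            exact_mod_cast this.le
          exact lt_of_lt_of_le hn (hf_mono.monotone this)
        · rw [hGom q h']; exact lt_trans hn (hfx n)
      · intro b hb
        filter_upwards with q
        by_cases h' : q.1 < ω
        · rw [hGnat q h' _ (Ordinal.lt_omega0.1 h').choose_spec]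
          exact lt_trans (hfx _) hb
        · rw [hGom q h']; exact hb
  have hecont : Continuous e := hGcont.subtype_mk _
  have : CompactSpace (Iio (ω+1) : Set Ordinal.{0}) := by
    rw [← isCompact_iff_compactSpace]
    rw [iio_eq_icc]
    exact isCompact_Icc
  exact ⟨t, hts, ⟨(Continuous.homeoOfEquivCompactToT2 (f := Equiv.ofBijective e ⟨hinj, hsurj⟩)
    hecont)⟩⟩

lemma aux_nocopy {s : Set Ordinal.{0}}
    (h : ∀ y ∈ s, ∃ U : Set Ordinal, IsOpen U ∧ U ∩ s = {y}) :
    ¬ HomeoCopy (ω+1) s := by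
  rintro ⟨t, hts, ⟨e⟩⟩
  have homega : (ω : Ordinal) ∈ Iio (ω+1) := by
    rw [Ordinal.add_one_eq_succ]; exact Order.lt_succ ω
  set p : (Iio (ω+1) : Set Ordinal.{0}) := ⟨ω, homega⟩ with hp_def
  obtain ⟨U, hU, hUs⟩ := h (e p).1 (hts (e p).2)
  have h1 : IsOpen ({e p} : Set t) := by
    have heq : (Subtype.val ⁻¹' U : Set t) = {e p} := by
      ext q
      simp only [mem_preimage, mem_singleton_iff]
      constructor
      · intro hq
        have hq2 : q.1 ∈ U ∩ s := ⟨hq, hts q.2⟩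
        rw [hUs] at hq2
        exact Subtype.ext hq2
      · rintro rfl
        have : (e p).1 ∈ ({(e p).1} : Set Ordinal) := rfl
        rw [← hUs] at this
        exact this.1
    rw [← heq]; exact hU.preimage continuous_subtype_val
  have h2 : IsOpen ({p} : Set (Iio (ω+1) : Set Ordinal.{0})) := by
    have heq : (⇑e ⁻¹' {e p}) = {p} := by
      ext q; simp [e.injective.eq_iff]
    rw [← heq]; exact h1.preimage e.continuous
  have h3 : ({p} : Set (Iio (ω+1) : Set Ordinal.{0})) ∈ nhds p := h2.mem_nhds rfl
  rw [mem_nhds_subtype] at h3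
  obtain ⟨W, hW, hWsub⟩ := h3
  obtain ⟨a, ha, hIoc⟩ := ((SuccOrder.hasBasis_nhds_Ioc_of_exists_lt ⟨0, omega0_pos⟩).mem_iff).1 hW
  have haω : a + 1 < ω := by
    rw [Ordinal.add_one_eq_succ]; exact Ordinal.isSuccLimit_omega0.succ_lt ha
  have hmem : (⟨a+1, lt_trans haω (by rw [Ordinal.add_one_eq_succ]; exact Order.lt_succ ω)⟩ :
      (Iio (ω+1) : Set Ordinal.{0})) ∈ Subtype.val ⁻¹' W := by
    apply hIoc
    have ha1 : a < a + 1 := by rw [Ordinal.add_one_eq_succ]; exact Order.lt_succ a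
    exact ⟨ha1, le_of_lt haω⟩
  have := hWsub hmem
  rw [mem_singleton_iff, Subtype.ext_iff] at this
  exact absurd this (ne_of_lt haω)

lemma dstep {n : ℕ} {x b : Ordinal.{0}} (hx : x ≠ 0)
    (hd : (ω:Ordinal)^(((n+1):ℕ):Ordinal) ∣ x) (hb : b < x) :
    ∃ y, y ≠ 0 ∧ (ω:Ordinal)^((n:ℕ):Ordinal) ∣ y ∧ b < y ∧ y < x := by
  set p := (ω:Ordinal)^((n:ℕ):Ordinal) with hp_def
  have hp : 0 < p := opow_pos _ omega0_pos
  obtain ⟨r, hr⟩ := hd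
  have hxr : x = p * (ω * r) := by
    rw [hr]; push_cast; rw [opow_add, opow_one, mul_assoc]
  have hr0 : r ≠ 0 := by
    rintro rfl
    rw [mul_zero, mul_zero] at hxr
    exact hx hxr
  set q := b / p with hq_def
  have hy_ne : p * (q + 1) ≠ 0 :=
    mul_ne_zero hp.ne' (by rw [Ordinal.add_one_eq_succ]; exact (Order.succ_ne_bot q))
  refine ⟨p * (q+1), hy_ne, ⟨q+1, rfl⟩, ?_, ?_⟩
  · have h1 : p * q + b % p = b := by rw [hq_def]; exact Ordinal.div_add_mod b p
    have h2 : b % p < p := Ordinal.mod_lt b hp.ne'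
    calc b = p * q + b % p := h1.symm
      _ < p * q + p := add_lt_add_right h2 _
      _ = p * (q + 1) := by rw [mul_add, mul_one]
  · rw [hxr, mul_lt_mul_iff_right₀ hp]
    have hlim : Order.IsSuccLimit (ω * r) :=
      Ordinal.isSuccLimit_mul_left Ordinal.isSuccLimit_omega0 (pos_iff_ne_zero.2 hr0)
    have hq_lt : q < ω * r := by
      have h3 : p * q ≤ b := Ordinal.mul_div_le b p
      have h4 : p * q < p * (ω * r) := lt_of_le_of_lt h3 (by rw [← hxr]; exact hb)
      exact (mul_lt_mul_iff_right₀ hp).1 h4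
    rw [Ordinal.add_one_eq_succ]
    exact hlim.succ_lt hq_lt

lemma qlemma {k : ℕ} (s : Fin k → Set Ordinal.{0})
    (hdisc : ∀ i, ∀ x ∈ s i, 0 < x → ∃ b < x, ∀ z ∈ s i, ¬(b < z ∧ z < x)) :
    ∀ (n : ℕ) (F : Finset (Fin k)), F.card = n → ∀ x : Ordinal, x ≠ 0 →
      (ω:Ordinal)^((n:ℕ):Ordinal) ∣ x → ∀ a < x, ∃ y, a < y ∧ y ≤ x ∧ ∀ i ∈ F, y ∉ s i := by
  intro n
  induction n with
  | zero =>
    intro F hF x hx0 _ a ha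
    refine ⟨x, ha, le_refl x, ?_⟩
    rw [Finset.card_eq_zero.1 hF]
    simp
  | succ n ih =>
    intro F hF x hx0 hdvd a ha
    by_cases hall : ∀ i ∈ F, x ∉ s i
    · exact ⟨x, ha, le_refl x, hall⟩
    · push_neg at hall
      obtain ⟨m, hmF, hxm⟩ := hall
      obtain ⟨b0, hb0x, hb0⟩ := hdisc m x hxm (pos_iff_ne_zero.2 hx0)
      have hbx : max a b0 < x := max_lt ha hb0x
      obtain ⟨x', hx'0, hx'dvd, hbx', hx'x⟩ := dstep hx0 hdvd hbx
      obtain ⟨y, hby, hyx', hy⟩ := ih (F.erase m)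
        (by rw [Finset.card_erase_of_mem hmF, hF]; rfl) x' hx'0 hx'dvd (max a b0) hbx'
      refine ⟨y, lt_of_le_of_lt (le_max_left a b0) hby,
        le_of_lt (lt_of_le_of_lt hyx' hx'x), ?_⟩
      intro i hiF hyi
      by_cases him : i = m
      · subst him
        exact hb0 y hyi ⟨lt_of_le_of_lt (le_max_right a b0) hby, lt_of_le_of_lt hyx' hx'x⟩
      · exact hy i (Finset.mem_erase.2 ⟨him, hiF⟩) hyi

lemma card_opow_le (n : ℕ) : ((ω:Ordinal.{0})^(n:Ordinal)).card ≤ Cardinal.aleph0 := by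
  induction n with
  | zero => simp
  | succ n ih =>
    push_cast
    rw [opow_add, opow_one, Ordinal.card_mul]
    calc ((ω:Ordinal)^(n:Ordinal)).card * (ω:Ordinal).card
        ≤ Cardinal.aleph0 * Cardinal.aleph0 := mul_le_mul' ih (by simp)
      _ = Cardinal.aleph0 := Cardinal.aleph0_mul_aleph0

lemma pos_dir (k : ℕ) (hk : 0 < k) :
    TopPH (ω^(k:Ordinal)+1) (fun _ : Fin k => ω + 1) := by
  intro c
  by_contra hcon
  push_neg at hcon
  set s : Fin k → Set Ordinal := fun i => Iio (ω^(k:Ordinal)+1) ∩ c ⁻¹' {i} with hs_def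
  have hdisc : ∀ i, ∀ x ∈ s i, 0 < x → ∃ b < x, ∀ z ∈ s i, ¬(b < z ∧ z < x) := by
    intro i x hxs hx0
    rcases Ordinal.zero_or_succ_or_isSuccLimit x with h0 | ⟨w, hw⟩ | hlim
    · exact absurd h0 hx0.ne'
    · refine ⟨w, by rw [← hw]; exact Order.lt_succ w, ?_⟩
      rintro z hz ⟨h1, h2⟩
      rw [← hw, Order.lt_succ_iff] at h2
      exact absurd h1 (not_lt.2 h2)
    · by_contra hno
      push_neg at hno
      have hcard : x.card ≤ Cardinal.aleph0 := by
        have hx : x ≤ ω^(k:Ordinal) := by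
          have h2 := hxs.1
          rw [mem_Iio, Ordinal.add_one_eq_succ, Order.lt_succ_iff] at h2
          exact h2
        exact le_trans (Ordinal.card_le_card hx) (card_opow_le k)
      exact hcon i (aux_copy hlim hcard hxs hno)
  obtain ⟨y, hy0, hyx, hy⟩ := qlemma s hdisc k Finset.univ (by simp) (ω^(k:Ordinal))
    (Ordinal.opow_ne_zero _ Ordinal.omega0_ne_zero) (dvd_refl _) 0
    (opow_pos _ omega0_pos)
  have hmem : y ∈ s (c y) := by
    refine ⟨?_, rfl⟩
    rw [mem_Iio, Ordinal.add_one_eq_succ]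
    exact lt_of_le_of_lt hyx (Order.lt_succ _)
  exact hy (c y) (Finset.mem_univ _) hmem

lemma neg_dir (k : ℕ) (hk : 0 < k) {β : Ordinal.{0}} (hβ : β ≤ ω^(k:Ordinal)) :
    ¬ TopPH β (fun _ : Fin k => ω + 1) := by
  classical
  intro h
  set rk : Ordinal → ℕ := fun x => Nat.findGreatest (fun j => (ω:Ordinal)^(j:Ordinal) ∣ x) (k-1)
    with hrk_def
  have hrk_le : ∀ x, rk x ≤ k - 1 := fun x => Nat.findGreatest_le _
  set c : Ordinal → Fin k := fun x => ⟨rk x, lt_of_le_of_lt (hrk_le x) (Nat.sub_lt hk one_pos)⟩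
    with hc_def
  obtain ⟨i, hcopy⟩ := h c
  refine aux_nocopy ?_ hcopy
  intro y hy
  have hyβ : y < β := hy.1
  have hyk : y < ω^(k:Ordinal) := lt_of_lt_of_le hyβ hβ
  have hcy : c y = i := hy.2
  by_cases hy0 : y = 0
  · refine ⟨Iio 1, isOpen_Iio, ?_⟩
    apply Subset.antisymm
    · rintro z ⟨hz1, _⟩
      rw [mem_Iio, Ordinal.lt_one_iff_zero] at hz1
      rw [mem_singleton_iff, hz1, hy0]
    · rintro z hz
      rw [mem_singleton_iff] at hz
      subst hz
      exact ⟨by rw [mem_Iio, hy0]; exact zero_lt_one, hy⟩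
  · set j := rk y with hj_def
    have hdvd : (ω:Ordinal)^(j:Ordinal) ∣ y :=
      Nat.findGreatest_spec (P := fun j => (ω:Ordinal)^(j:Ordinal) ∣ y) (m := 0)
        (Nat.zero_le _) (by simpa using one_dvd y)
    have hnotdvd : ¬ (ω:Ordinal)^(((j+1) : ℕ):Ordinal) ∣ y := by
      intro hdd
      by_cases hjk : j + 1 ≤ k - 1
      · exact (Nat.findGreatest_is_greatest (Nat.lt_succ_self j) hjk) hdd
      · have hj1 : j + 1 = k := by
          have := hrk_le y
          omega
        rw [hj1] at hdd
        exact absurd hyk (not_lt.2 (Ordinal.le_of_dvd hy0 hdd))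
    obtain ⟨m, hm⟩ := hdvd
    have hm0 : m ≠ 0 := by
      rintro rfl
      rw [mul_zero] at hm
      exact hy0 hm
    have hmω : ¬ (ω:Ordinal) ∣ m := by
      rintro ⟨m', rfl⟩
      apply hnotdvd
      refine ⟨m', ?_⟩
      rw [hm]
      push_cast
      rw [opow_add, opow_one, mul_assoc]
    obtain ⟨m₀, hm₀⟩ : ∃ m₀ : Ordinal, m = m₀ + 1 := by
      have hmod : m % ω < ω := Ordinal.mod_lt m Ordinal.omega0_ne_zero
      obtain ⟨nr, hnr⟩ := Ordinal.lt_omega0.1 hmod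
      have hnr0 : nr ≠ 0 := by
        rintro rfl
        exact hmω (Ordinal.dvd_of_mod_eq_zero (by rw [hnr]; norm_num))
      refine ⟨ω * (m / ω) + ((nr - 1 : ℕ) : Ordinal), ?_⟩
      have h1 : ω * (m / ω) + m % ω = m := Ordinal.div_add_mod m ω
      have hcast : (nr : Ordinal) = ((nr - 1 : ℕ) : Ordinal) + 1 := by
        have h2 : nr - 1 + 1 = nr := Nat.succ_pred_eq_of_pos (Nat.pos_of_ne_zero hnr0)
        rw [← Nat.cast_add_one, h2]
      calc m = ω * (m / ω) + (nr : Ordinal) := by conv_lhs => rw [← h1, hnr]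
        _ = ω * (m / ω) + (((nr - 1 : ℕ) : Ordinal) + 1) := by rw [hcast]
        _ = (ω * (m / ω) + ((nr - 1 : ℕ) : Ordinal)) + 1 := by rw [add_assoc]
    set P := (ω:Ordinal)^(j:Ordinal) with hP_def
    have hPpos : (0:Ordinal) < P := opow_pos _ omega0_pos
    refine ⟨Ioo (P * m₀) (y + 1), isOpen_Ioo, ?_⟩
    apply Subset.antisymm
    · rintro z ⟨⟨hz1, hz2⟩, hzmem⟩
      rw [mem_singleton_iff]
      have hzc : c z = i := hzmem.2
      have hrkz : rk z = j := by
        have hzz : c z = c y := by rw [hcy, hzc]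
        exact congrArg Fin.val hzz
      have hdvdz : P ∣ z := by
        have h3 : (ω:Ordinal)^((rk z : ℕ):Ordinal) ∣ z :=
          Nat.findGreatest_spec (P := fun j => (ω:Ordinal)^(j:Ordinal) ∣ z) (m := 0)
            (Nat.zero_le _) (by simpa using one_dvd z)
        rw [hrkz] at h3
        exact h3
      obtain ⟨m', hm'⟩ := hdvdz
      rw [hm'] at hz1 hz2
      have hzy : P * m' ≤ P * m := by
        rw [Ordinal.add_one_eq_succ, Order.lt_succ_iff, hm] at hz2
        exact hz2
      have h5 : m₀ < m' := (mul_lt_mul_iff_right₀ hPpos).1 hz1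
      have h6 : m' ≤ m := (mul_le_mul_iff_right₀ hPpos).1 hzy
      have h7 : m' = m := by
        refine le_antisymm h6 ?_
        rw [hm₀, Ordinal.add_one_eq_succ, Order.succ_le_iff]
        exact h5
      rw [hm', h7, ← hm]
    · rintro z hz
      rw [mem_singleton_iff] at hz
      subst hz
      refine ⟨⟨?_, ?_⟩, hy⟩
      · rw [hm, hm₀, mul_lt_mul_iff_right₀ hPpos, Ordinal.add_one_eq_succ]
        exact Order.lt_succ m₀
      · rw [Ordinal.add_one_eq_succ]
        exact Order.lt_succ _

/-- `P^top(ω+1)_k = ω^k + 1`. -/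
theorem topPH_omega_succ (k : ℕ) (hk : 0 < k) :
    IsLeast {β : Ordinal.{0} | TopPH β (fun _ : Fin k => ω + 1)} (ω ^ (k : Ordinal.{0}) + 1) := by
  constructor
  · exact pos_dir k hk
  · intro β hβ
    by_contra hlt
    rw [not_le] at hlt
    have hle : β ≤ ω^(k:Ordinal) := by
      rw [Ordinal.add_one_eq_succ, Order.lt_succ_iff] at hlt
      exact hlt
    exact neg_dir k hk hle hβ

end
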